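/- Let L be a semi-primary lattice, let λ := tp(L), let n be the number of nonzero parts of λ, let u ∈ L, and let u₁,…,u_m be independent cycles distinct from 0 whose join is u. If m < n, then there exist atoms a_{m+1},…,a_n ∈ L such that u₁,…,u_m,a_{m+1},…,a_n are independent. -/

import Mathlib

/-- The height of an element: the greatest length of chains from `⊥` to `u`. -/
noncomputable def ht {L : Type*} [Preorder L] (u : L) : ℕ := (Order.height u).toNat

/-- An element `z` is a cycle if the interval `[⊥, z]` is a chain. -/
def IsCycle {L : Type*} [Lattice L] [BoundedOrder L] (z : L) : Prop :=
  IsChain (· ≤ ·) (Set.Icc (⊥ : L) z)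

/-- An element `z` is a dual cycle if the interval `[z, ⊤]` is a chain. -/
def IsDualCycle {L : Type*} [Lattice L] [BoundedOrder L] (z : L) : Prop :=
  IsChain (· ≤ ·) (Set.Icc z (⊤ : L))

/-- A lattice is semi-primary if every element is a join of cycles and a meet of
dual cycles. -/
def IsSemiPrimary (L : Type*) [Lattice L] [BoundedOrder L] : Prop :=
  ∀ u : L, (∃ s : Finset L, (∀ z ∈ s, IsCycle z) ∧ u = s.sup id) ∧
           (∃ s : Finset L, (∀ z ∈ s, IsDualCycle z) ∧ u = s.inf id)

/-- A finite family of lattice elements is independent. -/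
def IndepFun {L : Type*} [Lattice L] [BoundedOrder L] {n : ℕ} (z : Fin n → L) : Prop :=
  ∀ i, ((Finset.univ.erase i).sup z) ⊓ z i = ⊥

/-- A partition is (represented by) a multiset of positive natural numbers. -/
def IsPartition (μ : Multiset ℕ) : Prop := ∀ p ∈ μ, 0 < p

/-- The `i`-th largest part of a partition (0-indexed, 0 if out of range). -/
def partGet (μ : Multiset ℕ) (i : ℕ) : ℕ := ((μ.sort (· ≤ ·)).reverse).getD i 0

/-- Componentwise order on partitions: `μ ≤ λ` iff `μᵢ ≤ λᵢ` for all `i`. -/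
def PartLE (μ lam : Multiset ℕ) : Prop := ∀ i, partGet μ i ≤ partGet lam i

/-- For `λ = (sⁿ)` and `μ ≤ λ`, the partition `λ − μ = (s − μₙ, …, s − μ₁)`. -/
def partSub (s n : ℕ) (μ : Multiset ℕ) : Multiset ℕ :=
  Multiset.filter (fun x => 0 < x)
    (↑((List.range n).map (fun i => s - partGet μ i)) : Multiset ℕ)

/-- `u` has type `μ`: `u` is a join of independent nonzero cycles whose multiset of
heights equals `μ`. -/
def IsTypeOf {L : Type*} [Lattice L] [BoundedOrder L] (u : L) (μ : Multiset ℕ) : Prop :=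
  ∃ (n : ℕ) (z : Fin n → L), (∀ i, IsCycle (z i)) ∧ (∀ i, z i ≠ ⊥) ∧ IndepFun z ∧
    u = Finset.univ.sup z ∧ (↑(List.ofFn (fun i => ht (z i))) : Multiset ℕ) = μ

/-- The lattice metric `d(u,v) = h(u ∨ v) − h(u ∧ v)`. -/
noncomputable def dLat {L : Type*} [Lattice L] (u v : L) : ℕ := ht (u ⊔ v) - ht (u ⊓ v)

/-- The sphere of radius `r` centered at `u`. -/
def sph {L : Type*} [Lattice L] (u : L) (r : ℕ) : Set L := {v | dLat u v ≤ r}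

/-- The `t`-th layer of the sphere of radius `r` centered at `u`. -/
def sphH {L : Type*} [Lattice L] (u : L) (r t : ℕ) : Set L :=
  {v | dLat u v ≤ r ∧ ht v = t}

/-- The elements of type `μ` in the sphere of radius `r` centered at `u`. -/
def sphT {L : Type*} [Lattice L] [BoundedOrder L] (u : L) (r : ℕ) (μ : Multiset ℕ) :
    Set L := {v | dLat u v ≤ r ∧ IsTypeOf v μ}

/-- A finite semi-primary lattice is down-enumerable. -/
def DownEnum (L : Type*) [Lattice L] [BoundedOrder L] : Prop :=
  ∀ (u v : L) (φ μ : Multiset ℕ), IsTypeOf u φ → IsTypeOf v φ →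
    Nat.card {w : L // IsTypeOf w μ ∧ w ≤ u} = Nat.card {w : L // IsTypeOf w μ ∧ w ≤ v}

/-- A finite semi-primary lattice is up-enumerable. -/
def UpEnum (L : Type*) [Lattice L] [BoundedOrder L] : Prop :=
  ∀ (u v : L) (φ μ : Multiset ℕ), IsTypeOf u φ → IsTypeOf v φ →
    Nat.card {w : L // IsTypeOf w μ ∧ u ≤ w} = Nat.card {w : L // IsTypeOf w μ ∧ v ≤ w}

/-- A lattice is enumerable if it is both down- and up-enumerable. -/
def Enumerable (L : Type*) [Lattice L] [BoundedOrder L] : Prop := DownEnum L ∧ UpEnum L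

/-- `α(φ,μ)`: the number of elements of type `μ` below a (any) element of type `φ`. -/
noncomputable def alphaP (L : Type*) [Lattice L] [BoundedOrder L] (φ μ : Multiset ℕ) : ℕ :=
  sSup {n | ∃ u : L, IsTypeOf u φ ∧ n = Nat.card {w : L // IsTypeOf w μ ∧ w ≤ u}}

/-- `β(φ,μ)`: the number of elements of type `μ` above a (any) element of type `φ`. -/
noncomputable def betaP (L : Type*) [Lattice L] [BoundedOrder L] (φ μ : Multiset ℕ) : ℕ :=
  sSup {n | ∃ u : L, IsTypeOf u φ ∧ n = Nat.card {w : L // IsTypeOf w μ ∧ u ≤ w}}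

/-- `α(μ, r₁, …, rₙ)`: the number of chains `x₁ ≤ ⋯ ≤ xₙ ≤ w` with `h(xᵢ) = rᵢ`,
below a (any) element `w` of type `μ`. -/
noncomputable def alphaChain (L : Type*) [Lattice L] [BoundedOrder L] (μ : Multiset ℕ)
    {n : ℕ} (r : Fin n → ℕ) : ℕ :=
  sSup {m | ∃ w : L, IsTypeOf w μ ∧
    m = Nat.card {x : Fin n → L // (∀ i, ht (x i) = r i) ∧ Monotone x ∧ ∀ i, x i ≤ w}}



section StmtTwoAux

variable {L : Type*} [Lattice L] [IsModularLattice L] [BoundedOrder L]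

lemma sp_height_ne_top (hlen : Order.krullDim L < ⊤) (x : L) : Order.height x ≠ ⊤ := by
  intro h
  have h1 := Order.height_le_krullDim x
  rw [h] at h1
  have h2 : (⊤ : WithBot ℕ∞) ≤ Order.krullDim L := by exact_mod_cast h1
  exact absurd (lt_of_le_of_lt h2 hlen) (lt_irrefl _)

lemma sp_height_lt_top (hlen : Order.krullDim L < ⊤) (x : L) : Order.height x < ⊤ :=
  lt_top_iff_ne_top.mpr (sp_height_ne_top hlen x)

lemma sp_height_strict (hlen : Order.krullDim L < ⊤) {x y : L} (h : x < y) :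
    Order.height x < Order.height y :=
  Order.height_strictMono h (sp_height_lt_top hlen x)

lemma sp_height_bot_eq_zero {x : L} (h : Order.height x = 0) : x = ⊥ := by
  rw [Order.height_eq_zero] at h
  exact h.eq_bot

lemma sp_height_of_isAtom (hlen : Order.krullDim L < ⊤) {a : L} (ha : IsAtom a) :
    Order.height a = 1 := by
  apply le_antisymm
  · rw [show (1:ℕ∞) = ((1:ℕ):ℕ∞) from rfl, Order.height_le_coe_iff]
    intro y hy
    rw [ha.2 y hy]
    simp
  · rw [ENat.one_le_iff_ne_zero]
    intro h0
    exact ha.1 (sp_height_bot_eq_zero h0)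

lemma sp_ht_of_isAtom (hlen : Order.krullDim L < ⊤) {a : L} (ha : IsAtom a) : ht a = 1 := by
  simp [ht, sp_height_of_isAtom hlen ha]

lemma sp_isAtom_of_height_le_one (hlen : Order.krullDim L < ⊤) {x : L} (hx : x ≠ ⊥)
    (h : Order.height x ≤ 1) : IsAtom x := by
  refine ⟨hx, fun b hb => ?_⟩
  have h1 : Order.height b < Order.height x := sp_height_strict hlen hb
  have h2 : Order.height b = 0 := ENat.lt_one_iff_eq_zero.mp (lt_of_lt_of_le h1 h)
  exact sp_height_bot_eq_zero h2

lemma sp_exists_atom_le (hlen : Order.krullDim L < ⊤) :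
    ∀ (k : ℕ) (x : L), ht x ≤ k → x ≠ ⊥ → ∃ a : L, IsAtom a ∧ a ≤ x := by
  intro k
  induction k with
  | zero =>
    intro x hx hne
    exfalso
    apply hne
    apply sp_height_bot_eq_zero
    have := ENat.coe_toNat (sp_height_ne_top hlen x)
    rw [← this]
    simpa [ht] using Nat.le_zero.mp hx
  | succ k ih =>
    intro x hx hne
    by_cases h : IsAtom x
    · exact ⟨x, h, le_rfl⟩
    · have : ∃ b, b < x ∧ b ≠ ⊥ := by
        by_contra hcon
        push_neg at hcon
        exact h ⟨hne, fun b hb => by_contra fun hb' => (hb' (hcon b hb)).elim⟩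
      obtain ⟨b, hbx, hbne⟩ := this
      have hhb : ht b ≤ k := by
        have h1 : Order.height b < Order.height x := sp_height_strict hlen hbx
        have h2 : (ht b : ℕ∞) < (ht x : ℕ∞) := by
          simp only [ht]
          rwa [ENat.coe_toNat (sp_height_ne_top hlen b),
            ENat.coe_toNat (sp_height_ne_top hlen x)]
        have := Nat.cast_lt.mp h2
        omega
      obtain ⟨a, ha, hab⟩ := ih b hhb hbne
      exact ⟨a, ha, hab.trans hbx.le⟩

lemma sp_eq_of_le_sup_atom {a x w : L} (ha : IsAtom a) (h1 : x ≤ w) (h2 : w ≤ x ⊔ a) :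
    w = x ∨ w = x ⊔ a := by
  by_cases haw : a ≤ w
  · exact Or.inr (le_antisymm h2 (sup_le h1 haw))
  · left
    have hinf : a ⊓ w = ⊥ := by
      rcases lt_or_eq_of_le (inf_le_left : a ⊓ w ≤ a) with h | h
      · exact ha.2 _ h
      · exact absurd (h ▸ inf_le_right) haw
    have hm : (x ⊔ a) ⊓ w = x ⊔ a ⊓ w := sup_inf_assoc_of_le a h1
    have hw : (x ⊔ a) ⊓ w = w := inf_eq_right.mpr h2
    rw [hw, hinf, sup_bot_eq] at hm
    exact hm

open scoped Classical in
lemma sp_length_le_aux (hlen : Order.krullDim L < ⊤) {x a : L} (ha : IsAtom a)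
    (hax : ¬ a ≤ x) :
    ∀ (N : ℕ) (p : LTSeries L), p.length = N → p.last ≤ x ⊔ a →
      (p.length : ℕ∞) ≤ Order.height (p.last ⊓ x) + (if p.last ≤ x then 0 else 1) := by
  intro N
  induction N with
  | zero => intro p hp _; simp [hp]
  | succ N ih =>
    intro p hp hlast
    have hne : p.length ≠ 0 := by omega
    have hlt : p.eraseLast.last < p.last := p.eraseLast_last_rel_last hne
    have hlen' : p.eraseLast.length = N := by simp [hp]
    have hle' : p.eraseLast.last ≤ x ⊔ a := hlt.le.trans hlast
    have IH := ih p.eraseLast hlen' hle'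
    rw [hlen'] at IH
    rw [hp]
    set l' := p.eraseLast.last with hl'def
    set l := p.last with hldef
    by_cases hlx : l ≤ x
    · have hl'x : l' ≤ x := hlt.le.trans hlx
      rw [inf_eq_left.mpr hlx, if_pos hlx, add_zero]
      rw [inf_eq_left.mpr hl'x, if_pos hl'x, add_zero] at IH
      have hstep : Order.height l' < Order.height l := sp_height_strict hlen hlt
      have : Order.height l' + 1 ≤ Order.height l :=
        (ENat.add_one_le_iff (sp_height_ne_top hlen l')).mpr hstep
      calc ((N + 1 : ℕ) : ℕ∞) = (N : ℕ∞) + 1 := by push_cast; ring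
        _ ≤ Order.height l' + 1 := add_le_add_left IH 1
        _ ≤ Order.height l := this
    · rw [if_neg hlx]
      by_cases hl'x : l' ≤ x
      · rw [inf_eq_left.mpr hl'x, if_pos hl'x, add_zero] at IH
        have hmono : Order.height l' ≤ Order.height (l ⊓ x) :=
          Order.height_mono (le_inf hlt.le hl'x)
        calc ((N + 1 : ℕ) : ℕ∞) = (N : ℕ∞) + 1 := by push_cast; ring
          _ ≤ Order.height l' + 1 := add_le_add_left IH 1
          _ ≤ Order.height (l ⊓ x) + 1 := add_le_add_left hmono 1
      · rw [if_neg hl'x] at IH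
        have hsup : x ⊔ l' = x ⊔ a := by
          rcases sp_eq_of_le_sup_atom ha (le_sup_left : x ≤ x ⊔ l')
            (sup_le le_sup_left hle') with h | h
          · exact absurd (le_sup_right.trans h.le) hl'x
          · exact h
        have hl_le : l ≤ x ⊔ l' := hsup ▸ hlast
        have hstrict : l' ⊓ x < l ⊓ x := by
          refine lt_of_le_of_ne (inf_le_inf_right x hlt.le) ?_
          intro heq
          have h5 : l' ⊔ x ⊓ l = (l' ⊔ x) ⊓ l := (sup_inf_assoc_of_le x hlt.le).symm
          have h6 : (l' ⊔ x) ⊓ l = l := inf_eq_right.mpr (by rwa [sup_comm x l'] at hl_le)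
          have h7 : x ⊓ l = x ⊓ l' := by rw [inf_comm x l, ← heq, inf_comm]
          have hll : l = l' := by rw [← h6, ← h5, h7, inf_comm x l', sup_inf_self]
          exact hlt.ne' hll
        have hstep : Order.height (l' ⊓ x) < Order.height (l ⊓ x) :=
          sp_height_strict hlen hstrict
        have h8 : Order.height (l' ⊓ x) + 1 ≤ Order.height (l ⊓ x) :=
          (ENat.add_one_le_iff (sp_height_ne_top hlen _)).mpr hstep
        calc ((N + 1 : ℕ) : ℕ∞) = (N : ℕ∞) + 1 := by push_cast; ring
          _ ≤ (Order.height (l' ⊓ x) + 1) + 1 := add_le_add_left IH 1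
          _ ≤ Order.height (l ⊓ x) + 1 := add_le_add_left h8 1

lemma sp_height_sup_atom_le (hlen : Order.krullDim L < ⊤) (x : L) {a : L} (ha : IsAtom a) :
    Order.height (x ⊔ a) ≤ Order.height x + 1 := by
  by_cases hax : a ≤ x
  · rw [sup_eq_left.mpr hax]; exact le_self_add
  apply Order.height_le
  intro p hp
  have h := sp_length_le_aux hlen ha hax p.length p rfl (hp ▸ le_rfl)
  rw [hp, inf_eq_right.mpr le_sup_left,
    if_neg (fun h' => hax (le_sup_right.trans h'))] at h
  exact h

lemma sp_height_add_le_sup (hlen : Order.krullDim L < ⊤) {x y : L} (hxy : x ⊓ y = ⊥) :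
    Order.height x + Order.height y ≤ Order.height (x ⊔ y) := by
  have key : ∀ (N : ℕ) (s : LTSeries L), s.length = N → s.head = ⊥ → s.last ≤ y →
      Order.height x + N ≤ Order.height (x ⊔ s.last) := by
    intro N
    induction N with
    | zero =>
      intro s h0 hh _
      have hlast : s.last = s.head := by
        show s.toFun _ = s.toFun _
        congr 1
        ext
        simp [h0]
      rw [hlast, hh]
      simp
    | succ N ih =>
      intro s hlenS hh hlast
      have hne : s.length ≠ 0 := by omega
      have hlt : s.eraseLast.last < s.last := s.eraseLast_last_rel_last hne
      have IH := ih s.eraseLast (by simp [hlenS]) (by simp [hh]) (hlt.le.trans hlast)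
      have hstrict : x ⊔ s.eraseLast.last < x ⊔ s.last := by
        refine lt_of_le_of_ne (sup_le_sup_left hlt.le x) ?_
        intro heq
        set l' := s.eraseLast.last with hl'
        set l := s.last with hl
        have h1 : l ≤ x ⊔ l' := heq ▸ le_sup_right
        have h2 : l' ⊔ x ⊓ l = (l' ⊔ x) ⊓ l := (sup_inf_assoc_of_le x hlt.le).symm
        have h3 : (l' ⊔ x) ⊓ l = l := inf_eq_right.mpr (by rwa [sup_comm x l'] at h1)
        have h4 : x ⊓ l = ⊥ := le_bot_iff.mp ((inf_le_inf_left x hlast).trans hxy.le)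
        have : l = l' := by rw [← h3, ← h2, h4, sup_bot_eq]
        exact hlt.ne' this
      have hstep := sp_height_strict hlen hstrict
      calc Order.height x + ((N + 1 : ℕ) : ℕ∞)
          = (Order.height x + N) + 1 := by push_cast; ring
        _ ≤ Order.height (x ⊔ s.eraseLast.last) + 1 := add_le_add_left IH 1
        _ ≤ Order.height (x ⊔ s.last) :=
            (ENat.add_one_le_iff (sp_height_ne_top hlen _)).mpr hstep
  set q := ht y with hq
  have hqy : Order.height y = (q : ℕ∞) := (ENat.coe_toNat (sp_height_ne_top hlen y)).symm
  obtain ⟨t, ht_last, ht_len⟩ := Order.exists_series_of_height_eq_coe y hqy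
  have hhead : t.head = ⊥ := by
    by_contra hhne
    have hcons := Order.length_le_height_last
      (p := t.cons ⊥ (Ne.bot_lt hhne))
    rw [RelSeries.last_cons, ht_last, hqy] at hcons
    simp only [RelSeries.cons_length, ht_len] at hcons
    have : (q + 1 : ℕ) ≤ q := by exact_mod_cast hcons
    omega
  have := key q t ht_len hhead (ht_last ▸ le_rfl)
  rw [ht_last] at this
  rw [hqy]
  exact this

lemma sp_step (hlen : Order.krullDim L < ⊤) {a x y : L} (ha : IsAtom a)
    (haxy : a ≤ x ⊔ y) (hxy : x ⊓ y = ⊥) :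
    ∃ p q : L, p ≤ y ∧ q ≤ x ∧ Order.height p ≤ 1 ∧ Order.height q ≤ 1 ∧ a ≤ q ⊔ p := by
  by_cases hax : a ≤ x
  · exact ⟨⊥, a, bot_le, hax, by simp, (sp_height_of_isAtom hlen ha).le, le_sup_left⟩
  set P := y ⊓ (a ⊔ x) with hP
  have hPy : P ≤ y := inf_le_left
  have hxP : x ⊔ P = (x ⊔ y) ⊓ (a ⊔ x) := by
    rw [hP, ← sup_inf_assoc_of_le y (le_sup_right : x ≤ a ⊔ x)]
  have haxP : a ≤ x ⊔ P := by rw [hxP]; exact le_inf haxy le_sup_left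
  have hPx : x ⊓ P = ⊥ := le_bot_iff.mp ((inf_le_inf_left x hPy).trans hxy.le)
  have h6 : Order.height x + Order.height P ≤ Order.height (x ⊔ P) :=
    sp_height_add_le_sup hlen hPx
  have h7 : x ⊔ P ≤ x ⊔ a := by rw [hxP, sup_comm a x]; exact inf_le_right
  have h8 : Order.height (x ⊔ P) ≤ Order.height x + 1 :=
    (Order.height_mono h7).trans (sp_height_sup_atom_le hlen x ha)
  have hPh : Order.height P ≤ 1 :=
    (WithTop.add_le_add_iff_left (sp_height_ne_top hlen x)).mp (h6.trans h8)
  set Q := x ⊓ (a ⊔ P) with hQ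
  have hQx : Q ≤ x := inf_le_left
  have hPQ : P ⊔ Q = (P ⊔ x) ⊓ (a ⊔ P) := by
    rw [hQ, ← sup_inf_assoc_of_le x (le_sup_right : P ≤ a ⊔ P)]
  have haQP : a ≤ Q ⊔ P := by
    rw [sup_comm, hPQ]
    exact le_inf (by rwa [sup_comm x P] at haxP) le_sup_left
  have hPQb : P ⊓ Q = ⊥ :=
    le_bot_iff.mp ((inf_le_inf hPy hQx).trans (by rw [inf_comm y x, hxy]))
  have h9 : Order.height P + Order.height Q ≤ Order.height (P ⊔ Q) :=
    sp_height_add_le_sup hlen hPQb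
  have h10 : P ⊔ Q ≤ P ⊔ a := by rw [hPQ, sup_comm a P]; exact inf_le_right
  have h11 : Order.height (P ⊔ Q) ≤ Order.height P + 1 :=
    (Order.height_mono h10).trans (sp_height_sup_atom_le hlen P ha)
  have hQh : Order.height Q ≤ 1 :=
    (WithTop.add_le_add_iff_left (sp_height_ne_top hlen P)).mp (h9.trans h11)
  exact ⟨P, Q, hPy, hQx, hPh, hQh, haQP⟩

lemma sp_le_atom_of_cycle (hlen : Order.krullDim L < ⊤) {z b w : L} (hz : IsCycle z)
    (hb : IsAtom b) (hbz : b ≤ z) (hw : w ≤ z) (hwh : Order.height w ≤ 1) : w ≤ b := by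
  by_cases hwb : w = b
  · exact hwb.le
  rcases hz (Set.mem_Icc.mpr ⟨bot_le, hw⟩) (Set.mem_Icc.mpr ⟨bot_le, hbz⟩) hwb with h | h
  · exact h
  · rcases lt_or_eq_of_le h with hlt | heq
    · have h1 := sp_height_strict hlen hlt
      rw [sp_height_of_isAtom hlen hb] at h1
      exact absurd (lt_of_lt_of_le h1 hwh) (lt_irrefl _)
    · exact heq.ge

lemma sp_sup_univ_succ {k : ℕ} (w : Fin (k+1) → L) :
    Finset.univ.sup w = w 0 ⊔ Finset.univ.sup (w ∘ Fin.succ) := by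
  rw [Fin.univ_succ, Finset.sup_cons, Finset.sup_map]
  rfl

lemma sp_tail_le_erase {k : ℕ} (w : Fin (k+1) → L) :
    Finset.univ.sup (w ∘ Fin.succ) ≤ (Finset.univ.erase 0).sup w :=
  Finset.sup_le fun j _ =>
    Finset.le_sup (Finset.mem_erase.mpr ⟨Fin.succ_ne_zero j, Finset.mem_univ _⟩)

lemma sp_indep_tail {k : ℕ} {w : Fin (k+1) → L} (h : IndepFun w) :
    IndepFun (w ∘ Fin.succ) := by
  intro i
  apply le_bot_iff.mp
  calc (Finset.univ.erase i).sup (w ∘ Fin.succ) ⊓ (w ∘ Fin.succ) i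
      ≤ (Finset.univ.erase i.succ).sup w ⊓ w i.succ := by
        refine inf_le_inf ?_ le_rfl
        refine Finset.sup_le fun j hj => ?_
        show w j.succ ≤ _
        exact Finset.le_sup (Finset.mem_erase.mpr
          ⟨fun hc => (Finset.mem_erase.mp hj).1 (Fin.succ_injective _ hc),
            Finset.mem_univ _⟩)
    _ = ⊥ := h i.succ

lemma sp_head_inf_tail {k : ℕ} {w : Fin (k+1) → L} (h : IndepFun w) :
    w 0 ⊓ Finset.univ.sup (w ∘ Fin.succ) = ⊥ := by
  apply le_bot_iff.mp
  rw [inf_comm]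
  calc Finset.univ.sup (w ∘ Fin.succ) ⊓ w 0
      ≤ (Finset.univ.erase 0).sup w ⊓ w 0 := inf_le_inf_right _ (sp_tail_le_erase w)
    _ = ⊥ := h 0

lemma sp_indep_of_le {k : ℕ} {w v : Fin k → L} (h : IndepFun w) (hle : ∀ i, v i ≤ w i) :
    IndepFun v := by
  intro i
  apply le_bot_iff.mp
  calc (Finset.univ.erase i).sup v ⊓ v i
      ≤ (Finset.univ.erase i).sup w ⊓ w i :=
        inf_le_inf (Finset.sup_mono_fun fun j _ => hle j) (hle i)
    _ = ⊥ := h i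

lemma sp_crux (hlen : Order.krullDim L < ⊤) : ∀ (k : ℕ) (w b : Fin k → L),
    (∀ i, IsCycle (w i)) → IndepFun w → (∀ i, IsAtom (b i)) → (∀ i, b i ≤ w i) →
    ∀ a : L, IsAtom a → a ≤ Finset.univ.sup w → a ≤ Finset.univ.sup b := by
  intro k
  induction k with
  | zero =>
    intro w b _ _ _ _ a _ haw
    rw [show (Finset.univ : Finset (Fin 0)) = ∅ from rfl, Finset.sup_empty] at haw ⊢
    exact haw
  | succ k ih =>
    intro w b hcyc hind hatom hble a ha haw
    rw [sp_sup_univ_succ w] at haw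
    have hxy := sp_head_inf_tail hind
    obtain ⟨p, q, hpy, hqx, hp1, hq1, haqp⟩ := sp_step hlen ha haw hxy
    have hq : q ≤ b 0 := sp_le_atom_of_cycle hlen (hcyc 0) (hatom 0) (hble 0) hqx hq1
    rw [sp_sup_univ_succ b]
    by_cases hpbot : p = ⊥
    · subst hpbot
      calc a ≤ q ⊔ ⊥ := haqp
        _ = q := sup_bot_eq q
        _ ≤ b 0 := hq
        _ ≤ b 0 ⊔ Finset.univ.sup (b ∘ Fin.succ) := le_sup_left
    · have hpa : IsAtom p := sp_isAtom_of_height_le_one hlen hpbot hp1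
      have hptail : p ≤ Finset.univ.sup (b ∘ Fin.succ) :=
        ih (w ∘ Fin.succ) (b ∘ Fin.succ) (fun i => hcyc i.succ) (sp_indep_tail hind)
          (fun i => hatom i.succ) (fun i => hble i.succ) p hpa hpy
      calc a ≤ q ⊔ p := haqp
        _ ≤ b 0 ⊔ Finset.univ.sup (b ∘ Fin.succ) := sup_le_sup hq hptail

lemma sp_height_sup_indep_ge (hlen : Order.krullDim L < ⊤) :
    ∀ (k : ℕ) (e : Fin k → L), (∀ i, e i ≠ ⊥) → IndepFun e →
      (k : ℕ∞) ≤ Order.height (Finset.univ.sup e) := by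
  intro k
  induction k with
  | zero => intro e _ _; simp
  | succ k ih =>
    intro e hne hind
    rw [sp_sup_univ_succ e]
    have h1 : (1 : ℕ∞) ≤ Order.height (e 0) := by
      rw [ENat.one_le_iff_ne_zero]
      intro h0
      exact hne 0 (sp_height_bot_eq_zero h0)
    have h2 : (k : ℕ∞) ≤ Order.height (Finset.univ.sup (e ∘ Fin.succ)) :=
      ih (e ∘ Fin.succ) (fun i => hne i.succ) (sp_indep_tail hind)
    calc ((k + 1 : ℕ) : ℕ∞) = 1 + (k : ℕ∞) := by push_cast; ring
      _ ≤ Order.height (e 0) + Order.height (Finset.univ.sup (e ∘ Fin.succ)) :=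
          add_le_add h1 h2
      _ ≤ Order.height (e 0 ⊔ Finset.univ.sup (e ∘ Fin.succ)) :=
          sp_height_add_le_sup hlen (sp_head_inf_tail hind)

lemma sp_height_sup_atoms_le (hlen : Order.krullDim L < ⊤) :
    ∀ (k : ℕ) (b : Fin k → L), (∀ i, IsAtom (b i)) →
      Order.height (Finset.univ.sup b) ≤ (k : ℕ∞) := by
  intro k
  induction k with
  | zero => intro b _; simp
  | succ k ih =>
    intro b hatom
    rw [sp_sup_univ_succ b, sup_comm]
    calc Order.height (Finset.univ.sup (b ∘ Fin.succ) ⊔ b 0)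
        ≤ Order.height (Finset.univ.sup (b ∘ Fin.succ)) + 1 :=
          sp_height_sup_atom_le hlen _ (hatom 0)
      _ ≤ (k : ℕ∞) + 1 := add_le_add_left (ih (b ∘ Fin.succ) fun i => hatom i.succ) 1
      _ = ((k + 1 : ℕ) : ℕ∞) := by push_cast; ring

lemma sp_exists_indep_atom (hlen : Order.krullDim L < ⊤) {lam : Multiset ℕ}
    (htop : IsTypeOf (⊤ : L) lam) {n : ℕ} (hn : n = Multiset.card lam) {k : ℕ}
    (w : Fin k → L) (hcyc : ∀ i, IsCycle (w i)) (hne : ∀ i, w i ≠ ⊥)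
    (hind : IndepFun w) (hkn : k < n) :
    ∃ a : L, IsAtom a ∧ a ⊓ Finset.univ.sup w = ⊥ := by
  by_contra hcon
  push_neg at hcon
  have hall : ∀ a : L, IsAtom a → a ≤ Finset.univ.sup w := by
    intro a ha
    by_contra hle
    have hinf : a ⊓ Finset.univ.sup w = ⊥ := by
      rcases lt_or_eq_of_le (inf_le_left : a ⊓ Finset.univ.sup w ≤ a) with h | h
      · exact ha.2 _ h
      · exact absurd (h ▸ inf_le_right) hle
    exact hcon a ha hinf
  choose bfun hbatom hble using fun i =>
    sp_exists_atom_le hlen (ht (w i)) (w i) le_rfl (hne i)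
  obtain ⟨n', c, hccyc, hcne, hcind, hctop, hcard⟩ := htop
  have hn' : n' = n := by
    rw [hn, ← hcard]
    simp
  choose e heatom hele using fun i =>
    sp_exists_atom_le hlen (ht (c i)) (c i) le_rfl (hcne i)
  have heind : IndepFun e := sp_indep_of_le hcind hele
  have hbound₁ : (n' : ℕ∞) ≤ Order.height (Finset.univ.sup e) :=
    sp_height_sup_indep_ge hlen n' e (fun i => (heatom i).1) heind
  have hEB : Finset.univ.sup e ≤ Finset.univ.sup bfun :=
    Finset.sup_le fun i _ =>
      sp_crux hlen k w bfun hcyc hind hbatom hble (e i) (heatom i) (hall _ (heatom i))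
  have hbound₂ : Order.height (Finset.univ.sup bfun) ≤ (k : ℕ∞) :=
    sp_height_sup_atoms_le hlen k bfun hbatom
  have hfin : (n' : ℕ∞) ≤ (k : ℕ∞) :=
    hbound₁.trans ((Order.height_mono hEB).trans hbound₂)
  have : n' ≤ k := Nat.cast_le.mp hfin
  omega

lemma sp_indep_snoc {k : ℕ} {g : Fin k → L} {x : L} (hg : IndepFun g)
    (hx : x ⊓ Finset.univ.sup g = ⊥) : IndepFun (Fin.snoc g x) := by
  intro i
  apply le_bot_iff.mp
  induction i using Fin.lastCases with
  | last =>
    have hsup : (Finset.univ.erase (Fin.last k)).sup (Fin.snoc g x) ≤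
        Finset.univ.sup g := by
      refine Finset.sup_le fun j hj => ?_
      obtain ⟨j', rfl⟩ := Fin.exists_castSucc_eq.mpr (Finset.mem_erase.mp hj).1
      rw [Fin.snoc_castSucc]
      exact Finset.le_sup (Finset.mem_univ _)
    simp only [Fin.snoc_last]
    calc (Finset.univ.erase (Fin.last k)).sup (Fin.snoc g x) ⊓ x
        ≤ Finset.univ.sup g ⊓ x := inf_le_inf_right x hsup
      _ = ⊥ := by rwa [inf_comm]
  | cast i' =>
    set s := (Finset.univ.erase i').sup g with hs
    have h1 : (Finset.univ.erase (Fin.castSucc i')).sup (Fin.snoc g x) ≤ s ⊔ x := by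
      refine Finset.sup_le fun j hj => ?_
      by_cases hjl : j = Fin.last k
      · subst hjl; rw [Fin.snoc_last]; exact le_sup_right
      · obtain ⟨j', rfl⟩ := Fin.exists_castSucc_eq.mpr hjl
        rw [Fin.snoc_castSucc]
        have hji : j' ≠ i' := fun hc => (Finset.mem_erase.mp hj).1 (by rw [hc])
        exact le_trans
          (Finset.le_sup (Finset.mem_erase.mpr ⟨hji, Finset.mem_univ _⟩)) le_sup_left
    have hsg : s ≤ Finset.univ.sup g := Finset.sup_mono (Finset.erase_subset _ _)
    set t := s ⊔ g i' with hts
    have htg : t ≤ Finset.univ.sup g := sup_le hsg (Finset.le_sup (Finset.mem_univ _))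
    have hxt : x ⊓ t = ⊥ := le_bot_iff.mp ((inf_le_inf_left x htg).trans hx.le)
    have hst : (s ⊔ x) ⊓ t = s := by
      rw [sup_inf_assoc_of_le x (le_sup_left : s ≤ t), hxt, sup_bot_eq]
    simp only [Fin.snoc_castSucc]
    calc (Finset.univ.erase (Fin.castSucc i')).sup (Fin.snoc g x) ⊓ g i'
        ≤ (s ⊔ x) ⊓ g i' := inf_le_inf_right _ h1
      _ = (s ⊔ x) ⊓ (t ⊓ g i') := by rw [inf_eq_right.mpr (le_sup_right : g i' ≤ t)]
      _ = ((s ⊔ x) ⊓ t) ⊓ g i' := by rw [inf_assoc]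
      _ = s ⊓ g i' := by rw [hst]
      _ = ⊥ := hg i'

lemma sp_isCycle_of_isAtom {a : L} (ha : IsAtom a) : IsCycle a := by
  intro u hu v hv _
  rcases ha.le_iff.mp hu.2 with rfl | rfl <;>
    rcases ha.le_iff.mp hv.2 with rfl | rfl <;> simp

lemma sp_aux_ext (hlen : Order.krullDim L < ⊤) {lam : Multiset ℕ}
    (htop : IsTypeOf (⊤ : L) lam) {n : ℕ} (hn : n = Multiset.card lam) :
    ∀ (j k : ℕ) (w : Fin k → L), (∀ i, IsCycle (w i)) → (∀ i, w i ≠ ⊥) → IndepFun w →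
      k + j ≤ n → ∃ a : Fin j → L, (∀ i, IsAtom (a i)) ∧ IndepFun (Fin.append w a) := by
  intro j
  induction j with
  | zero =>
    intro k w hcyc hne hind _
    refine ⟨Fin.elim0, fun i => i.elim0, ?_⟩
    have he : Fin.append w (Fin.elim0 : Fin 0 → L) = w := by
      rw [Fin.append_elim0]
      rfl
    rw [he]
    exact hind
  | succ j ih =>
    intro k w hcyc hne hind hkn
    obtain ⟨a', ha'atom, ha'ind⟩ := ih k w hcyc hne hind (by omega)
    set g := Fin.append w a' with hg
    have hgcyc : ∀ i, IsCycle (g i) := by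
      refine Fin.addCases ?_ ?_ <;> intro i'
      · rw [hg, Fin.append_left]; exact hcyc i'
      · rw [hg, Fin.append_right]; exact sp_isCycle_of_isAtom (ha'atom i')
    have hgne : ∀ i, g i ≠ ⊥ := by
      refine Fin.addCases ?_ ?_ <;> intro i'
      · rw [hg, Fin.append_left]; exact hne i'
      · rw [hg, Fin.append_right]; exact (ha'atom i').1
    obtain ⟨a₀, ha₀, ha₀ind⟩ :=
      sp_exists_indep_atom hlen htop hn g hgcyc hgne ha'ind (by omega)
    refine ⟨Fin.snoc a' a₀, ?_, ?_⟩
    · intro i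
      induction i using Fin.lastCases with
      | last => rw [Fin.snoc_last]; exact ha₀
      | cast i' => rw [Fin.snoc_castSucc]; exact ha'atom i'
    · rw [Fin.append_snoc]
      exact sp_indep_snoc ha'ind ha₀ind

end StmtTwoAux

/-- In a semi-primary lattice `L` with `λ := tp(L)` having `n` nonzero
parts, let `u₁,…,u_m` be independent nonzero cycles with join `u`. If `m < n`, then there
are atoms `a_{m+1},…,a_n` such that `u₁,…,u_m,a_{m+1},…,a_n` are independent. -/
theorem stmt2 {L : Type*} [Lattice L] [IsModularLattice L] [BoundedOrder L]
    (hlen : Order.krullDim L < ⊤) (hsp : IsSemiPrimary L)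
    (lam : Multiset ℕ) (hlam : IsPartition lam) (htop : IsTypeOf (⊤ : L) lam)
    (n : ℕ) (hn : n = Multiset.card lam)
    (u : L) (m : ℕ) (z : Fin m → L)
    (hcyc : ∀ i, IsCycle (z i)) (hne : ∀ i, z i ≠ ⊥) (hind : IndepFun z)
    (hu : u = Finset.univ.sup z) (hmn : m < n) :
    ∃ a : Fin (n - m) → L, (∀ j, ht (a j) = 1) ∧ IndepFun (Fin.append z a) := by
  obtain ⟨a, hatom, hind'⟩ :=
    sp_aux_ext hlen htop hn (n - m) m z hcyc hne hind (by omega)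
  exact ⟨a, fun j => sp_ht_of_isAtom hlen (hatom j), hind'⟩
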